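/- Let V be a real inner product space of dimension 2n with orthogonal almost complex structure J, and let Q be a symmetric hybrid bilinear form on V. Then there exists an orthonormal basis of V of the form {e₁, Je₁, …, e_n, Je_n} and real numbers μ₁, …, μ_n such that the self-adjoint operator Q¹ associated to Q satisfies Q¹(e_α) = μ_α e_α and Q¹(Je_α) = μ_α Je_α for all α. -/

import Mathlib

open Module Submodule

theorem stmt17_aux (n : ℕ) : ∀ {V : Type u} [NormedAddCommGroup V] [InnerProductSpace ℝ V]
    [FiniteDimensional ℝ V], Module.finrank ℝ V = 2 * n →
    ∀ (J : V →ₗ[ℝ] V), (∀ x, J (J x) = -x) →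
    (∀ x y : V, inner ℝ (J x) (J y) = (inner ℝ x y : ℝ)) →
    ∀ (Q1 : V →ₗ[ℝ] V), Q1.IsSymmetric →
    (∀ x, Q1 (J x) = J (Q1 x)) →
    ∃ (e : Fin n → V) (μ : Fin n → ℝ),
      Orthonormal ℝ (fun p : Fin n × Bool => if p.2 then J (e p.1) else e p.1) ∧
      Submodule.span ℝ (Set.range (fun p : Fin n × Bool => if p.2 then J (e p.1) else e p.1)) = ⊤ ∧
      ∀ α, Q1 (e α) = μ α • e α ∧ Q1 (J (e α)) = μ α • J (e α) := by
  induction n with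
  | zero =>
    intro V _ _ _ hdim J hJ2 hJorth Q1 hsymm hcomm
    have h0 : finrank ℝ V = 0 := by omega
    have : Subsingleton V := Module.finrank_zero_iff.mp h0
    refine ⟨fun i => i.elim0, fun i => i.elim0,
      ⟨fun i => i.1.elim0, fun i _ => i.1.elim0⟩, Subsingleton.elim _ _, fun i => i.elim0⟩
  | succ n ih =>
    intro V _ _ _ hdim J hJ2 hJorth Q1 hsymm hcomm
    have hp : 0 < finrank ℝ V := by omega
    have hnt : Nontrivial V := Module.finrank_pos_iff.mp hp
    -- get a unit eigenvector
    obtain ⟨v, hv⟩ := hsymm.hasEigenvalue_iSup_of_finiteDimensional.exists_hasEigenvector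
    obtain ⟨μ₀, v, hv⟩ : ∃ (μ₀ : ℝ) (v : V), Module.End.HasEigenvector Q1 μ₀ v := ⟨_, v, hv⟩
    have hv0 : v ≠ 0 := hv.right
    set e₀ : V := ‖v‖⁻¹ • v with he₀def
    have hve : Q1 e₀ = μ₀ • e₀ := by
      rw [he₀def, map_smul, hv.apply_eq_smul, smul_comm]
    have hne : ‖e₀‖ = 1 := by
      simp [he₀def, norm_smul, inv_mul_cancel₀ (norm_ne_zero_iff.2 hv0)]
    have hinner_e₀ : (inner ℝ e₀ e₀ : ℝ) = 1 := by
      rw [real_inner_self_eq_norm_sq, hne]; norm_num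
    have hJee : (inner ℝ (J e₀) (J e₀) : ℝ) = 1 := by rw [hJorth]; exact hinner_e₀
    have hperp' : (inner ℝ (J e₀) e₀ : ℝ) = 0 := by
      have h1 := hJorth (J e₀) e₀
      rw [hJ2, inner_neg_left] at h1
      have h2 := real_inner_comm (J e₀) e₀
      linarith
    have hperp : (inner ℝ e₀ (J e₀) : ℝ) = 0 := by
      rw [real_inner_comm]; exact hperp'
    set U : Submodule ℝ V := Submodule.span ℝ {e₀, J e₀} with hUdef
    have he₀U : e₀ ∈ U := Submodule.subset_span (by simp)
    have hJe₀U : J e₀ ∈ U := Submodule.subset_span (by simp)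
    have hWperp : ∀ x ∈ Uᗮ, (inner ℝ e₀ x : ℝ) = 0 ∧ (inner ℝ (J e₀) x : ℝ) = 0 := by
      intro x hx
      exact ⟨(Submodule.mem_orthogonal U x).mp hx e₀ he₀U,
        (Submodule.mem_orthogonal U x).mp hx (J e₀) hJe₀U⟩
    have hmemW : ∀ x : V, (inner ℝ e₀ x : ℝ) = 0 → (inner ℝ (J e₀) x : ℝ) = 0 → x ∈ Uᗮ := by
      intro x h1 h2
      rw [Submodule.mem_orthogonal]
      intro u hu
      rw [hUdef, Submodule.mem_span_pair] at hu
      obtain ⟨a, b, rfl⟩ := hu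
      simp [inner_add_left, real_inner_smul_left, h1, h2]
    have hJW : ∀ x ∈ Uᗮ, J x ∈ Uᗮ := by
      intro x hx
      obtain ⟨h1, h2⟩ := hWperp x hx
      apply hmemW
      · have h3 := hJorth e₀ (J x)
        rw [hJ2, inner_neg_right] at h3
        rw [← h3, h2, neg_zero]
      · rw [hJorth]; exact h1
    have hQ1W : ∀ x ∈ Uᗮ, Q1 x ∈ Uᗮ := by
      intro x hx
      obtain ⟨h1, h2⟩ := hWperp x hx
      apply hmemW
      · rw [← hsymm e₀ x, hve, real_inner_smul_left, h1, mul_zero]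
      · rw [← hsymm (J e₀) x, hcomm, hve, map_smul, real_inner_smul_left, h2, mul_zero]
    -- dimension of Uᗮ
    have honpair : Orthonormal ℝ (![e₀, J e₀]) := by
      rw [orthonormal_iff_ite]
      intro i j
      fin_cases i <;> fin_cases j <;>
        simp [hinner_e₀, hJee, hperp, hperp', hne, (by have h := hJee; rw [real_inner_self_eq_norm_sq] at h; nlinarith [norm_nonneg (J e₀)] : ‖J e₀‖ = 1)]
    have hUrange : U = Submodule.span ℝ (Set.range ![e₀, J e₀]) := by
      rw [hUdef]
      congr 1
      ext x
      simp only [Fin.exists_fin_two, Matrix.cons_val_zero, Matrix.cons_val_one, Matrix.head_cons, Set.mem_insert_iff, Set.mem_singleton_iff, Set.mem_range]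
      tauto
    have hfrU : finrank ℝ U = 2 := by
      rw [hUrange, finrank_span_eq_card honpair.linearIndependent]
      simp
    have hfrW : finrank ℝ Uᗮ = 2 * n := by
      have h2 : finrank ℝ U + finrank ℝ Uᗮ = finrank ℝ V :=
        Submodule.finrank_add_finrank_orthogonal U
      omega
    -- restrict everything to Uᗮ
    set JW : Uᗮ →ₗ[ℝ] Uᗮ := J.restrict hJW with hJWdef
    set Q1W : Uᗮ →ₗ[ℝ] Uᗮ := Q1.restrict hQ1W with hQ1Wdef
    have hJWcoe : ∀ x : Uᗮ, (JW x : V) = J x := fun x => rfl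
    have hQ1Wcoe : ∀ x : Uᗮ, (Q1W x : V) = Q1 x := fun x => rfl
    have hJ2W : ∀ x : Uᗮ, JW (JW x) = -x := by
      intro x; ext; rw [hJWcoe, hJWcoe, hJ2]; rfl
    have hJorthW : ∀ x y : Uᗮ, inner ℝ (JW x) (JW y) = (inner ℝ x y : ℝ) := by
      intro x y
      rw [Submodule.coe_inner, Submodule.coe_inner, hJWcoe, hJWcoe, hJorth]
    have hsymmW : Q1W.IsSymmetric := by
      intro x y
      rw [Submodule.coe_inner, Submodule.coe_inner, hQ1Wcoe, hQ1Wcoe]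
      exact hsymm (x : V) (y : V)
    have hcommW : ∀ x : Uᗮ, Q1W (JW x) = JW (Q1W x) := by
      intro x; ext; rw [hQ1Wcoe, hJWcoe, hJWcoe, hQ1Wcoe, hcomm]
    obtain ⟨e', μ', horth', hspan', heig'⟩ := ih hfrW JW hJ2W hJorthW Q1W hsymmW hcommW
    -- assemble
    set e : Fin (n + 1) → V := Fin.cons e₀ (fun i => (e' i : V)) with hedef
    set μ : Fin (n + 1) → ℝ := Fin.cons μ₀ μ' with hμdef
    set g : Fin n × Bool → Uᗮ := fun p => if p.2 then JW (e' p.1) else e' p.1 with hgdef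
    set F : Fin (n + 1) × Bool → V :=
      (fun p : Fin (n + 1) × Bool => if p.2 then J (e p.1) else e p.1) with hFdef
    have hF0 : ∀ b : Bool, F (0, b) = if b then J e₀ else e₀ := by
      intro b; simp [hFdef, hedef]
    have hFsucc : ∀ (i : Fin n) (b : Bool), F (i.succ, b) = (g (i, b) : V) := by
      intro i b
      cases b <;> simp [hFdef, hedef, hgdef, hJWcoe]
    have hgW : ∀ p, (g p : V) ∈ Uᗮ := fun p => (g p).2
    have horthg : Orthonormal ℝ g := horth'
    refine ⟨e, μ, ?_, ?_, ?_⟩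
    · -- orthonormality
      rw [orthonormal_iff_ite]
      rintro ⟨i, b⟩ ⟨j, c⟩
      show (inner ℝ (F (i, b)) (F (j, c)) : ℝ) = _
      induction i using Fin.cases with
      | zero =>
        induction j using Fin.cases with
        | zero =>
          rw [hF0, hF0]
          cases b <;> cases c <;> simp [hinner_e₀, hJee, hperp, hperp', hne, (by have h := hJee; rw [real_inner_self_eq_norm_sq] at h; nlinarith [norm_nonneg (J e₀)] : ‖J e₀‖ = 1)]
        | succ j =>
          rw [hF0, hFsucc]
          obtain ⟨h1, h2⟩ := hWperp _ (hgW (j, c))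
          have : ((0 : Fin (n+1)), b) ≠ (Fin.succ j, c) := by
            simp [Prod.ext_iff, Fin.succ_ne_zero, (Fin.succ_ne_zero j).symm]
          rw [if_neg this]
          cases b
          · simpa using h1
          · simpa using h2
      | succ i =>
        induction j using Fin.cases with
        | zero =>
          rw [hF0, hFsucc, real_inner_comm]
          obtain ⟨h1, h2⟩ := hWperp _ (hgW (i, b))
          have : ((Fin.succ i : Fin (n+1)), b) ≠ (0, c) := by
            simp [Prod.ext_iff, Fin.succ_ne_zero]
          rw [if_neg this]
          cases c
          · simpa using h1
          · simpa using h2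
        | succ j =>
          rw [hFsucc, hFsucc, ← Submodule.coe_inner]
          rw [orthonormal_iff_ite] at horthg
          rw [horthg (i, b) (j, c)]
          simp [Prod.ext_iff, Fin.succ_inj]
    · -- spanning
      rw [eq_top_iff, ← Submodule.sup_orthogonal_of_hasOrthogonalProjection (K := U)]
      apply sup_le
      · rw [hUdef]
        apply Submodule.span_le.mpr
        rintro x (rfl | rfl)
        · exact Submodule.subset_span ⟨(0, false), (hF0 false).trans rfl⟩
        · exact Submodule.subset_span ⟨(0, true), (hF0 true).trans rfl⟩
      · intro x hx
        have hx' : (⟨x, hx⟩ : Uᗮ) ∈ (⊤ : Submodule ℝ Uᗮ) := Submodule.mem_top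
        rw [← hspan'] at hx'
        have := Submodule.mem_map_of_mem (f := Uᗮ.subtype) hx'
        rw [Submodule.map_span] at this
        refine Submodule.span_mono ?_ this
        rintro y ⟨z, ⟨p, rfl⟩, rfl⟩
        refine ⟨(p.1.succ, p.2), ?_⟩
        simpa using hFsucc p.1 p.2
    · -- eigenvalue equations
      intro α
      induction α using Fin.cases with
      | zero =>
        constructor
        · simpa [hedef, hμdef] using hve
        · simp only [hedef, hμdef, Fin.cons_zero]
          rw [hcomm, hve, map_smul]
      | succ i =>
        obtain ⟨h1, h2⟩ := heig' i
        constructor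
        · have := congrArg (Uᗮ.subtype) h1
          simpa [hedef, hμdef, hQ1Wcoe] using this
        · have := congrArg (Uᗮ.subtype) h2
          simp only [map_smul, Submodule.coe_subtype] at this
          rw [hQ1Wcoe, hJWcoe] at this
          simpa [hedef, hμdef] using this

theorem stmt17 {V : Type*} [NormedAddCommGroup V] [InnerProductSpace ℝ V]
    [FiniteDimensional ℝ V] (n : ℕ) (hdim : Module.finrank ℝ V = 2 * n)
    (J : V →ₗ[ℝ] V) (hJ2 : ∀ x, J (J x) = -x)
    (hJorth : ∀ x y : V, inner ℝ (J x) (J y) = (inner ℝ x y : ℝ))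
    (Q : LinearMap.BilinForm ℝ V)
    (hsym : ∀ x y, Q x y = Q y x) (hhyb : ∀ x y, Q (J x) (J y) = Q x y)
    (Q1 : V →ₗ[ℝ] V) (hQ1 : ∀ x y : V, inner ℝ (Q1 x) y = Q x y) :
    ∃ (e : Fin n → V) (μ : Fin n → ℝ),
      Orthonormal ℝ (fun p : Fin n × Bool => if p.2 then J (e p.1) else e p.1) ∧
      Submodule.span ℝ (Set.range (fun p : Fin n × Bool => if p.2 then J (e p.1) else e p.1)) = ⊤ ∧
      ∀ α, Q1 (e α) = μ α • e α ∧ Q1 (J (e α)) = μ α • J (e α) := by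
  have hsymm : Q1.IsSymmetric := by
    intro x y
    rw [hQ1, hsym, ← hQ1, real_inner_comm]
  have hcomm : ∀ x, Q1 (J x) = J (Q1 x) := by
    intro x
    apply ext_inner_right ℝ
    intro y
    have hy : y = J (-(J y)) := by rw [map_neg, hJ2, neg_neg]
    rw [hQ1]
    conv_lhs => rw [hy]
    rw [hhyb]
    conv_rhs => rw [hy]
    rw [hJorth, ← hQ1, inner_neg_right]
  exact stmt17_aux n hdim J hJ2 hJorth Q1 hsymm hcomm
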